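/- Fix integers d ≥ 1 and n ≥ 0. Let K_d(n) be the number of sequences of n steps, each step a nonzero vector in {−1,0,1}^d, whose vector sum is zero (closed walks of a king on the d-dimensional chessboard ℤ^d), and let T_k be the number of sequences of k elements of {−1,0,1} whose sum is zero (the central trinomial coefficients). Then K_d(n) = Σ_{k=0}^{n} (−1)^{n−k}·C(n,k)·T_k^d. -/

import Mathlib

open Finset

/-- The number of closed king walks of length `n` on the `d`-dimensional chessboard `ℤ^d`:
sequences of `n` steps, each a nonzero vector in `{−1,0,1}^d`, whose vector sum is zero. -/
def kingWalks (d n : ℕ) : ℕ :=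
  ((Fintype.piFinset (fun _ : Fin n =>
      (Fintype.piFinset (fun _ : Fin d => ({-1, 0, 1} : Finset ℤ))).erase 0)).filter
    (fun w => ∑ i, w i = 0)).card

/-- The `k`-th central trinomial coefficient: the number of sequences of `k` elements of
`{−1,0,1}` whose sum is zero. -/
def centralTrinomial (k : ℕ) : ℕ :=
  ((Fintype.piFinset (fun _ : Fin k => ({-1, 0, 1} : Finset ℤ))).filter
    (fun w => ∑ i, w i = 0)).card

/-- Auxiliary count over an arbitrary finite index type. -/
def trinCount (ι : Type) [Fintype ι] [DecidableEq ι] (d : ℕ) : ℕ :=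
  ((Fintype.piFinset (fun _ : ι => Fintype.piFinset (fun _ : Fin d => ({-1, 0, 1} : Finset ℤ)))).filter
    (fun w => ∑ i, w i = 0)).card

lemma trinCount_congr {ι κ : Type} [Fintype ι] [DecidableEq ι] [Fintype κ] [DecidableEq κ]
    (e : ι ≃ κ) (d : ℕ) : trinCount ι d = trinCount κ d := by
  unfold trinCount
  refine Finset.card_nbij' (fun w => w ∘ e.symm) (fun v => v ∘ e) ?_ ?_ ?_ ?_
  · intro w hw
    simp only [Finset.mem_coe, Finset.mem_filter, Fintype.mem_piFinset] at hw ⊢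
    refine ⟨fun j x => hw.1 _ _, ?_⟩
    exact (Equiv.sum_comp e.symm w).trans hw.2
  · intro v hv
    simp only [Finset.mem_coe, Finset.mem_filter, Fintype.mem_piFinset] at hv ⊢
    refine ⟨fun i x => hv.1 _ _, ?_⟩
    exact (Equiv.sum_comp e v).trans hv.2
  · intro w _; funext i; simp
  · intro v _; funext j; simp

lemma trinCount_fin (k d : ℕ) : trinCount (Fin k) d = centralTrinomial k ^ d := by
  have : trinCount (Fin k) d
      = (Fintype.piFinset (fun _ : Fin d =>
          ((Fintype.piFinset (fun _ : Fin k => ({-1, 0, 1} : Finset ℤ))).filter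
            (fun w => ∑ i, w i = 0)))).card := by
    unfold trinCount
    refine Finset.card_nbij' (fun w => Function.swap w) (fun v => Function.swap v) ?_ ?_ ?_ ?_
    · intro w hw
      simp only [Finset.mem_coe, Finset.mem_filter, Fintype.mem_piFinset] at hw ⊢
      intro j
      refine ⟨fun i => hw.1 i j, ?_⟩
      have := congrFun hw.2 j
      simpa [Finset.sum_apply] using this
    · intro v hv
      simp only [Finset.mem_coe, Finset.mem_filter, Fintype.mem_piFinset] at hv ⊢
      refine ⟨fun i j => (hv j).1 i, ?_⟩
      funext j
      simpa [Finset.sum_apply] using (hv j).2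
    · intro w _; rfl
    · intro v _; rfl
  rw [this, Fintype.card_piFinset]
  simp [centralTrinomial]

lemma restrict_count (d n : ℕ) (S : Finset (Fin n)) :
    ((Fintype.piFinset (fun _ : Fin n =>
        Fintype.piFinset (fun _ : Fin d => ({-1, 0, 1} : Finset ℤ)))).filter
      (fun w => (∑ i, w i = 0) ∧ ∀ i ∈ S, w i = 0)).card
      = centralTrinomial (n - S.card) ^ d := by
  classical
  have key : ((Fintype.piFinset (fun _ : Fin n =>
        Fintype.piFinset (fun _ : Fin d => ({-1, 0, 1} : Finset ℤ)))).filter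
      (fun w => (∑ i, w i = 0) ∧ ∀ i ∈ S, w i = 0)).card
      = trinCount ↥(Sᶜ : Finset (Fin n)) d := by
    unfold trinCount
    refine Finset.card_nbij' (fun w => fun i => w i.1)
      (fun v => fun i => if h : i ∈ (Sᶜ : Finset (Fin n)) then v ⟨i, h⟩ else 0) ?_ ?_ ?_ ?_
    · intro w hw
      simp only [Finset.mem_coe, Finset.mem_filter, Fintype.mem_piFinset] at hw ⊢
      refine ⟨fun i x => hw.1 _ _, ?_⟩
      rw [Finset.univ_eq_attach, Finset.sum_attach (Sᶜ : Finset (Fin n)) w,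
        Finset.sum_subset (Finset.subset_univ _)
          (fun i _ hi => hw.2.2 i (by simpa using hi))]
      exact hw.2.1
    · intro v hv
      simp only [Finset.mem_coe, Finset.mem_filter, Fintype.mem_piFinset] at hv ⊢
      refine ⟨fun i x => ?_, ?_, ?_⟩
      · by_cases h : i ∈ (Sᶜ : Finset (Fin n))
        · rw [dif_pos h]; exact hv.1 _ _
        · rw [dif_neg h]; simp
      · rw [← Finset.sum_subset (Finset.subset_univ (Sᶜ : Finset (Fin n)))
          (fun i _ hi => dif_neg hi), ← Finset.sum_attach (Sᶜ : Finset (Fin n))]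
        rw [Finset.univ_eq_attach] at hv
        rw [← hv.2]
        exact Finset.sum_congr rfl fun x _ => by simp
      · intro i hi
        exact dif_neg (by simp [hi])
    · intro w hw
      simp only [Finset.mem_coe, Finset.mem_filter, Fintype.mem_piFinset] at hw
      funext i
      change (if h : i ∈ (Sᶜ : Finset (Fin n)) then w i else 0) = w i
      by_cases h : i ∈ (Sᶜ : Finset (Fin n))
      · rw [dif_pos h]
      · rw [dif_neg h]
        exact (hw.2.2 i (by simpa using h)).symm
    · intro v _
      funext i
      simp
  have hc : (Sᶜ : Finset (Fin n)).card = n - S.card := by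
    simp [Finset.card_compl]
  rw [key, trinCount_congr ((Sᶜ : Finset (Fin n)).equivFin.trans (finCongr hc)) d,
    trinCount_fin]

/-- `K_d(n) = Σ_{k=0}^n (−1)^{n−k}·C(n,k)·T_k^d`. -/
theorem kingWalks_eq_alternating_sum_centralTrinomial (d n : ℕ) (hd : 1 ≤ d) :
    (kingWalks d n : ℤ)
      = ∑ k ∈ Finset.range (n + 1),
          (-1 : ℤ) ^ (n - k) * (n.choose k : ℤ) * (centralTrinomial k : ℤ) ^ d := by
  classical
  set cube := (Fintype.piFinset (fun _ : Fin d => ({-1, 0, 1} : Finset ℤ))) with hcube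
  set B := Fintype.piFinset (fun _ : Fin n => cube) with hB
  -- step 1: kingWalks as a sum with indicator product
  have h1 : (kingWalks d n : ℤ)
      = ∑ w ∈ B.filter (fun w => ∑ i, w i = 0),
          ∏ i : Fin n, ((-(if w i = 0 then (1 : ℤ) else 0)) + 1) := by
    rw [kingWalks]
    have hset : (Fintype.piFinset (fun _ : Fin n => cube.erase 0)).filter (fun w => ∑ i, w i = 0)
        = (B.filter (fun w => ∑ i, w i = 0)).filter (fun w => ∀ i, w i ≠ 0) := by
      ext w
      simp only [Finset.mem_filter, Fintype.mem_piFinset, Finset.mem_erase, hB]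
      constructor
      · rintro ⟨h1, h2⟩
        exact ⟨⟨fun a => (h1 a).2, h2⟩, fun i => (h1 i).1⟩
      · rintro ⟨⟨h1, h2⟩, h3⟩
        exact ⟨fun a => ⟨h3 a, h1 a⟩, h2⟩
    rw [hset, Finset.card_filter]
    push_cast
    refine Finset.sum_congr rfl fun w _ => ?_
    by_cases h : ∀ i, w i ≠ 0
    · rw [if_pos h]
      rw [Finset.prod_congr rfl (fun i _ => by rw [if_neg (h i)])]
      simp
    · rw [if_neg h]
      push_neg at h
      obtain ⟨i, hi⟩ := h
      exact (Finset.prod_eq_zero (Finset.mem_univ i) (by rw [if_pos hi]; ring)).symm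
  rw [h1]
  -- step 2: expand the product over subsets
  have h2 : ∀ w : Fin n → Fin d → ℤ,
      (∏ i : Fin n, ((-(if w i = 0 then (1 : ℤ) else 0)) + 1))
        = ∑ S ∈ (Finset.univ : Finset (Fin n)).powerset,
            (-1 : ℤ) ^ S.card * (if ∀ i ∈ S, w i = 0 then 1 else 0) := by
    intro w
    rw [Finset.prod_add]
    refine Finset.sum_congr rfl fun S _ => ?_
    rw [Finset.prod_const_one, mul_one]
    by_cases h : ∀ i ∈ S, w i = 0
    · rw [if_pos h, mul_one]
      rw [Finset.prod_congr rfl (fun i hi => by rw [if_pos (h i hi)] : ∀ i ∈ S, _ = (-1 : ℤ))]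
      rw [Finset.prod_const]
    · rw [if_neg h, mul_zero]
      push_neg at h
      obtain ⟨i, hi, hne⟩ := h
      exact Finset.prod_eq_zero hi (by rw [if_neg hne, neg_zero])
  rw [Finset.sum_congr rfl (fun w _ => h2 w), Finset.sum_comm]
  -- step 3: inner sum is a cardinality
  have h3 : ∀ S ∈ (Finset.univ : Finset (Fin n)).powerset,
      ∑ w ∈ B.filter (fun w => ∑ i, w i = 0),
          (-1 : ℤ) ^ S.card * (if ∀ i ∈ S, w i = 0 then 1 else 0)
        = (-1 : ℤ) ^ S.card * (centralTrinomial (n - S.card) ^ d : ℕ) := by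
    intro S _
    rw [← Finset.mul_sum]
    congr 1
    rw [Finset.sum_boole, Finset.filter_filter]
    norm_cast
    rw [hB, hcube]
    convert restrict_count d n S using 2
  rw [Finset.sum_congr rfl h3]
  -- step 4: sum over powerset by cardinality
  have h4 := Finset.sum_powerset_apply_card
    (fun m => (-1 : ℤ) ^ m * (centralTrinomial (n - m) ^ d : ℕ))
    (x := (Finset.univ : Finset (Fin n)))
  simp only [Finset.card_univ, Fintype.card_fin] at h4
  rw [h4]
  -- step 5: reindex k = n - m
  rw [← Finset.sum_range_reflect]
  refine Finset.sum_congr rfl fun k hk => ?_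
  rw [Finset.mem_range, Nat.lt_succ_iff] at hk
  simp only [Nat.add_sub_cancel]
  rw [Nat.sub_sub_self hk, Nat.choose_symm hk, nsmul_eq_mul]
  push_cast
  ring
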